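/- Let A, B ⊆ ℝⁿ with 0 ∈ closure(A \ {0}) ∩ closure(B \ {0}). If there exist d > 1 and C > 0 such that A ⊆ ST_d(B;C) in a neighbourhood of 0, then D(A) ⊆ D(B). In particular, if A and B are ST-equivalent then D(A) = D(B). -/

import Mathlib

open Filter Metric Topology MeasureTheory

noncomputable section

abbrev E (n : ℕ) := EuclideanSpace ℝ (Fin n)

/-- Direction set of `A` at the origin. -/
def Dir (n : ℕ) (A : Set (E n)) : Set (E n) :=
  {a | ‖a‖ = 1 ∧ ∃ x : ℕ → E n, (∀ i, x i ∈ A \ {0}) ∧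
    Tendsto x atTop (nhds (0 : E n)) ∧
    Tendsto (fun i => (‖x i‖)⁻¹ • x i) atTop (nhds a)}

/-- Sea-tangle neighbourhood of degree `d` and width `C`. -/
def STg (n : ℕ) (d C : ℝ) (A : Set (E n)) : Set (E n) :=
  {x | Metric.infDist x A ≤ C * ‖x‖ ^ d}

/-- Cone over the direction set (real tangent cone). -/
def LD (n : ℕ) (A : Set (E n)) : Set (E n) :=
  {x | ∃ a ∈ Dir n A, ∃ t : ℝ, 0 ≤ t ∧ x = t • a}

/-- Sequence selection property. -/
def SSP (n : ℕ) (S : Set (E n)) : Prop :=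
  ∀ a : ℕ → E n, (∀ m, a m ≠ 0) → Tendsto a atTop (nhds (0 : E n)) →
    (∃ L ∈ Dir n S, Tendsto (fun m => (‖a m‖)⁻¹ • a m) atTop (nhds L)) →
    ∀ ε > (0:ℝ), ∃ b : ℕ → E n, (∀ m, b m ∈ S) ∧
      ∀ᶠ m in atTop, ‖a m - b m‖ ≤ ε * min ‖a m‖ ‖b m‖

/-- ST-equivalence of set-germs at the origin. -/
def STEquiv (n : ℕ) (A B : Set (E n)) : Prop :=
  ∃ d₁ > (1:ℝ), ∃ C₁ > (0:ℝ), ∃ d₂ > (1:ℝ), ∃ C₂ > (0:ℝ), ∃ ε > (0:ℝ),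
    B ∩ ball (0 : E n) ε ⊆ STg n d₁ C₁ A ∧ A ∩ ball (0 : E n) ε ⊆ STg n d₂ C₂ B


lemma normalize_sub_le {F : Type*} [NormedAddCommGroup F] [NormedSpace ℝ F]
    (x y : F) (hx : x ≠ 0) (hy : y ≠ 0) :
    ‖(‖y‖⁻¹ • y) - (‖x‖⁻¹ • x)‖ ≤ 2 * ‖y - x‖ / ‖x‖ := by
  have hx' : (0:ℝ) < ‖x‖ := norm_pos_iff.mpr hx
  have hy' : (0:ℝ) < ‖y‖ := norm_pos_iff.mpr hy
  have key : (‖y‖⁻¹ • y) - (‖x‖⁻¹ • x)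
      = (‖y‖⁻¹ - ‖x‖⁻¹) • y + ‖x‖⁻¹ • (y - x) := by
    rw [smul_sub, sub_smul]; abel
  rw [key]
  have h1 : ‖(‖y‖⁻¹ - ‖x‖⁻¹) • y‖ ≤ ‖y - x‖ / ‖x‖ := by
    rw [norm_smul, Real.norm_eq_abs]
    have heq : ‖y‖⁻¹ - ‖x‖⁻¹ = (‖x‖ - ‖y‖) / (‖x‖ * ‖y‖) := by
      field_simp
    rw [heq, abs_div, abs_of_pos (mul_pos hx' hy')]
    have habs : |‖x‖ - ‖y‖| ≤ ‖y - x‖ := by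
      calc |‖x‖ - ‖y‖| ≤ ‖x - y‖ := abs_norm_sub_norm_le x y
      _ = ‖y - x‖ := norm_sub_rev x y
    calc |‖x‖ - ‖y‖| / (‖x‖ * ‖y‖) * ‖y‖ ≤ ‖y - x‖ / (‖x‖ * ‖y‖) * ‖y‖ := by gcongr
    _ = ‖y - x‖ / ‖x‖ := by field_simp
  have h2 : ‖‖x‖⁻¹ • (y - x)‖ = ‖y - x‖ / ‖x‖ := by
    rw [norm_smul, Real.norm_eq_abs, abs_of_pos (inv_pos.mpr hx')]
    ring
  calc ‖(‖y‖⁻¹ - ‖x‖⁻¹) • y + ‖x‖⁻¹ • (y - x)‖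
      ≤ ‖(‖y‖⁻¹ - ‖x‖⁻¹) • y‖ + ‖‖x‖⁻¹ • (y - x)‖ := norm_add_le _ _
    _ ≤ ‖y - x‖ / ‖x‖ + ‖y - x‖ / ‖x‖ := by rw [h2]; gcongr
    _ = 2 * ‖y - x‖ / ‖x‖ := by ring

lemma dir_subset (n : ℕ) (A B : Set (E n)) (hB : (0 : E n) ∈ closure (B \ {0}))
    (d C ε : ℝ) (hd : 1 < d) (_hC : 0 < C) (hε : 0 < ε)
    (hsub : A ∩ ball (0 : E n) ε ⊆ STg n d C B) :
    Dir n A ⊆ Dir n B := by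
  have hBne : (B \ {0}).Nonempty := by
    rcases (closure_nonempty_iff.mp ⟨0, hB⟩) with ⟨b, hb⟩
    exact ⟨b, hb⟩
  have hBne' : B.Nonempty := hBne.mono Set.diff_subset
  rintro a ⟨ha1, x, hx, hx0, hxa⟩
  have hnorm : Tendsto (fun i => ‖x i‖) atTop (nhds 0) := by
    simpa using hx0.norm
  have hxpos : ∀ i, (0:ℝ) < ‖x i‖ := fun i => norm_pos_iff.mpr (hx i).2
  have hpow : Tendsto (fun i => (C+1) * ‖x i‖ ^ (d-1)) atTop (nhds 0) := by
    have h := (hnorm.rpow_const (p := d - 1) (Or.inr (by linarith)))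
    rw [Real.zero_rpow (by linarith)] at h
    simpa using h.const_mul (C+1)
  have hev1 : ∀ᶠ i in atTop, ‖x i‖ < ε := hnorm.eventually (eventually_lt_nhds hε)
  have hev2 : ∀ᶠ i in atTop, (C+1) * ‖x i‖ ^ (d-1) ≤ 1/2 := by
    have := hpow.eventually (eventually_le_nhds (by norm_num : (0:ℝ) < 1/2))
    simpa using this
  rcases (hev1.and hev2).exists_forall_of_atTop with ⟨N, hN⟩
  set u : ℕ → E n := fun i => x (i + N) with hu
  have hu1 : ∀ i, ‖u i‖ < ε := fun i => (hN (i+N) (by omega)).1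
  have hu2 : ∀ i, (C+1) * ‖u i‖ ^ (d-1) ≤ 1/2 := fun i => (hN (i+N) (by omega)).2
  have hupos : ∀ i, (0:ℝ) < ‖u i‖ := fun i => hxpos _
  have hch : ∀ i, ∃ z ∈ B, dist (u i) z < (C+1) * ‖u i‖ ^ d := by
    intro i
    have hmem : u i ∈ STg n d C B := by
      apply hsub
      exact ⟨(hx (i+N)).1, by simpa [mem_ball, dist_eq_norm] using hu1 i⟩
    have hpos : (0:ℝ) < ‖u i‖ ^ d := Real.rpow_pos_of_pos (hupos i) d
    have : Metric.infDist (u i) B < (C+1) * ‖u i‖ ^ d := by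
      calc Metric.infDist (u i) B ≤ C * ‖u i‖ ^ d := hmem
      _ < (C+1) * ‖u i‖ ^ d := by nlinarith
    exact (Metric.infDist_lt_iff hBne').mp this
  choose y hyB hyd using hch
  have hsplit : ∀ i, (C+1) * ‖u i‖ ^ d = ((C+1) * ‖u i‖ ^ (d-1)) * ‖u i‖ := by
    intro i
    have h := Real.rpow_add (hupos i) (d-1) 1
    rw [Real.rpow_one] at h
    rw [show d - 1 + 1 = d by ring] at h
    rw [h]; ring
  have hdy : ∀ i, dist (u i) (y i) ≤ ‖u i‖ / 2 := by
    intro i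
    have := (hyd i).le
    rw [hsplit i] at this
    calc dist (u i) (y i) ≤ ((C+1) * ‖u i‖ ^ (d-1)) * ‖u i‖ := this
    _ ≤ (1/2) * ‖u i‖ := by
        have := hu2 i; have := (hupos i).le; nlinarith
    _ = ‖u i‖ / 2 := by ring
  have hypos : ∀ i, (0:ℝ) < ‖y i‖ := by
    intro i
    have h1 : ‖u i - y i‖ ≤ ‖u i‖ / 2 := by
      simpa [dist_eq_norm] using hdy i
    have h2 : ‖u i‖ - ‖y i‖ ≤ ‖u i - y i‖ := norm_sub_norm_le _ _
    have := hupos i; linarith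
  have hyne : ∀ i, y i ≠ 0 := fun i => norm_pos_iff.mp (hypos i)
  have hynorm : ∀ i, ‖y i‖ ≤ 2 * ‖x (i + N)‖ := by
    intro i
    have h1 : ‖y i - u i‖ ≤ ‖u i‖ / 2 := by
      rw [norm_sub_rev]; simpa [dist_eq_norm] using hdy i
    have h2 : ‖y i‖ - ‖u i‖ ≤ ‖y i - u i‖ := norm_sub_norm_le _ _
    have h3 : ‖u i‖ = ‖x (i+N)‖ := rfl
    have h4 := hupos i
    linarith
  have hy0 : Tendsto y atTop (nhds (0 : E n)) := by
    apply squeeze_zero_norm hynorm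
    have : Tendsto (fun i => ‖x (i + N)‖) atTop (nhds 0) :=
      hnorm.comp (tendsto_add_atTop_nat N)
    simpa using this.const_mul 2
  have hdiff : Tendsto (fun i => (‖y i‖⁻¹ • y i) - (‖u i‖⁻¹ • u i)) atTop (nhds 0) := by
    refine squeeze_zero_norm (a := fun i => 2 * ((C+1) * ‖u i‖ ^ (d-1))) ?_ ?_
    · intro i
      calc ‖(‖y i‖⁻¹ • y i) - (‖u i‖⁻¹ • u i)‖
          ≤ 2 * ‖y i - u i‖ / ‖u i‖ :=
            normalize_sub_le (u i) (y i) (hx (i+N)).2 (hyne i)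
        _ ≤ 2 * ((C+1) * ‖u i‖ ^ (d-1)) := by
            rw [div_le_iff₀ (hupos i)]
            have h1 : ‖y i - u i‖ ≤ ((C+1) * ‖u i‖ ^ (d-1)) * ‖u i‖ := by
              rw [norm_sub_rev, ← dist_eq_norm, ← hsplit i]
              exact (hyd i).le
            nlinarith [hupos i, h1]
    · have : Tendsto (fun i => (C+1) * ‖x (i+N)‖ ^ (d-1)) atTop (nhds 0) :=
        hpow.comp (tendsto_add_atTop_nat N)
      simpa using this.const_mul 2
  have hua : Tendsto (fun i => (‖u i‖⁻¹ • u i)) atTop (nhds a) :=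
    hxa.comp (tendsto_add_atTop_nat N)
  have hya : Tendsto (fun i => (‖y i‖⁻¹ • y i)) atTop (nhds a) := by
    have := hdiff.add hua
    simpa using this
  exact ⟨ha1, y, fun i => ⟨hyB i, hyne i⟩, hy0, hya⟩

theorem stmt7 (n : ℕ) (A B : Set (E n)) (hA : (0 : E n) ∈ closure (A \ {0}))
    (hB : (0 : E n) ∈ closure (B \ {0})) :
    ((∃ d > (1:ℝ), ∃ C > (0:ℝ), ∃ ε > (0:ℝ), A ∩ ball (0 : E n) ε ⊆ STg n d C B) →
      Dir n A ⊆ Dir n B) ∧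
    (STEquiv n A B → Dir n A = Dir n B) := by
  constructor
  · rintro ⟨d, hd, C, hC, ε, hε, hsub⟩
    exact dir_subset n A B hB d C ε hd hC hε hsub
  · rintro ⟨d₁, hd₁, C₁, hC₁, d₂, hd₂, C₂, hC₂, ε, hε, h1, h2⟩
    exact Set.Subset.antisymm
      (dir_subset n A B hB d₂ C₂ ε hd₂ hC₂ hε h2)
      (dir_subset n B A hA d₁ C₁ ε hd₁ hC₁ hε h1)
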